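/- Let A = (a_{ij}) be an n×n real matrix such that D(A) belongs to the class 𝒟 and D(A) is strongly connected, and let {i_1, i_2, …, i_{s+1}} be the set of all pendant vertices adjacent to a common (non-pendant) neighbour q. Then for all m, t ∈ {1,…,s+1}, Σ_{M ∈ 𝕄(i_m, q)} β̄_{i_m, q}(M) = Σ_{M ∈ 𝕄(i_t, q)} β̄_{i_t, q}(M). -/

import Mathlib

open Matrix

/-- Adjacency in a digraph given by relation `G`: a 2-cycle between distinct `i` and `j`. -/
def Adjd {n : ℕ} (G : Fin n → Fin n → Prop) (i j : Fin n) : Prop :=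
  i ≠ j ∧ G i j ∧ G j i

/-- `G` is a simple symmetric digraph: no loops and edges come in both directions. -/
def IsSSD {n : ℕ} (G : Fin n → Fin n → Prop) : Prop :=
  (∀ i, ¬ G i i) ∧ ∀ i j, G i j → G j i

/-- A vertex is pendant if it is incident to exactly one 2-cycle. -/
def Pendant {n : ℕ} (G : Fin n → Fin n → Prop) (i : Fin n) : Prop :=
  ∃! j, Adjd G i j

/-- The class 𝒟: simple symmetric digraphs in which every non-pendant vertex is
adjacent to at least one pendant vertex. -/
def InClassD {n : ℕ} (G : Fin n → Fin n → Prop) : Prop :=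
  IsSSD G ∧ ∀ i, ¬ Pendant G i → ∃ j, Adjd G i j ∧ Pendant G j

/-- Strong connectivity: a directed path from every vertex to every other vertex. -/
def StronglyConnected {n : ℕ} (G : Fin n → Fin n → Prop) : Prop :=
  ∀ i j : Fin n, Relation.ReflTransGen G i j

/-- An unordered pair `e` is a 2-cycle of `G`. -/
def IsEdge {n : ℕ} (G : Fin n → Fin n → Prop) (e : Sym2 (Fin n)) : Prop :=
  ∃ i j, e = s(i, j) ∧ Adjd G i j

/-- A matching: a set of pairwise vertex-disjoint 2-cycles. -/
def IsMatching {n : ℕ} (G : Fin n → Fin n → Prop) (M : Finset (Sym2 (Fin n))) : Prop :=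
  (∀ e ∈ M, IsEdge G e) ∧
  ∀ e ∈ M, ∀ f ∈ M, e ≠ f → ∀ v : Fin n, v ∈ e → v ∉ f

/-- A maximum matching: a matching of maximum cardinality. -/
def IsMaxMatching {n : ℕ} (G : Fin n → Fin n → Prop) (M : Finset (Sym2 (Fin n))) : Prop :=
  IsMatching G M ∧ ∀ M', IsMatching G M' → M'.card ≤ M.card

/-- A cycle chain, recorded by its list of (distinct) vertices `i₁, …, i_{m+1}`. -/
def IsCycleChain {n : ℕ} (G : Fin n → Fin n → Prop) (c : List (Fin n)) : Prop :=
  c.Nodup ∧ 2 ≤ c.length ∧ c.Chain' (Adjd G)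

/-- A cycle chain from `i` to `j`. -/
def IsCycleChainBtw {n : ℕ} (G : Fin n → Fin n → Prop) (i j : Fin n) (c : List (Fin n)) : Prop :=
  IsCycleChain G c ∧ c.head? = some i ∧ c.getLast? = some j

/-- The list of 2-cycles of a cycle chain. -/
def chainEdges {n : ℕ} (c : List (Fin n)) : List (Sym2 (Fin n)) :=
  List.zipWith (fun a b => s(a, b)) c c.tail

/-- The cycle chain `c` is alternating with respect to `M`: its 2-cycles are alternately
in `M` and outside `M`, with the first and last 2-cycle in `M` (so its length is odd). -/
def IsAltChain {n : ℕ} (M : Finset (Sym2 (Fin n))) (c : List (Fin n)) : Prop :=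
  Odd (chainEdges c).length ∧
  ∀ k (h : k < (chainEdges c).length), ((chainEdges c).get ⟨k, h⟩ ∈ M ↔ Even k)

/-- The digraph of a square matrix: edge `(i,j)` iff `A i j ≠ 0`. -/
def DA {n : ℕ} (A : Matrix (Fin n) (Fin n) ℝ) : Fin n → Fin n → Prop :=
  fun i j => A i j ≠ 0

/-- The cycle product `a_{ij} a_{ji}` of a 2-cycle. -/
def cycProd {n : ℕ} (A : Matrix (Fin n) (Fin n) ℝ) (e : Sym2 (Fin n)) : ℝ :=
  Sym2.lift ⟨fun i j => A i j * A j i, fun i j => mul_comm _ _⟩ e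

/-- The matching product η(M) of a matching `M`. -/
noncomputable def matchProd {n : ℕ} (A : Matrix (Fin n) (Fin n) ℝ)
    (M : Finset (Sym2 (Fin n))) : ℝ :=
  ∏ e ∈ M, cycProd A e

/-- The (finite) collection of all maximum matchings of `D(A)`. -/
noncomputable def maxMatchings {n : ℕ} (A : Matrix (Fin n) (Fin n) ℝ) :
    Finset (Finset (Sym2 (Fin n))) :=
  {M | IsMaxMatching (DA A) M}.toFinite.toFinset

/-- Δ_A: the sum of the matching products over all maximum matchings of `D(A)`. -/
noncomputable def Delta {n : ℕ} (A : Matrix (Fin n) (Fin n) ℝ) : ℝ :=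
  ∑ M ∈ maxMatchings A, matchProd A M

/-- 𝕄(i,j): maximum matchings with respect to which some cycle chain from `i` to `j`
is an alternating cycle chain. -/
def MMset {n : ℕ} (A : Matrix (Fin n) (Fin n) ℝ) (i j : Fin n) :
    Set (Finset (Sym2 (Fin n))) :=
  {M | IsMaxMatching (DA A) M ∧ ∃ c, IsCycleChainBtw (DA A) i j c ∧ IsAltChain M c}

/-- `i` and `j` are maximally matchable: 𝕄(i,j) ≠ ∅. -/
def MaxMatchable {n : ℕ} (A : Matrix (Fin n) (Fin n) ℝ) (i j : Fin n) : Prop :=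
  (MMset A i j).Nonempty

open scoped Classical in
/-- The (unique) alternating cycle chain from `i` to `j`, when it exists. -/
noncomputable def theChain {n : ℕ} (A : Matrix (Fin n) (Fin n) ℝ) (i j : Fin n) :
    List (Fin n) :=
  if h : ∃ c, IsCycleChainBtw (DA A) i j c ∧ ∃ M ∈ MMset A i j, IsAltChain M c
  then h.choose else []

/-- The path product along a cycle chain: `a_{i₁ i₂} a_{i₂ i₃} ⋯ a_{i_m i_{m+1}}`. -/
def pathProd {n : ℕ} (A : Matrix (Fin n) (Fin n) ℝ) (c : List (Fin n)) : ℝ :=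
  (List.zipWith (fun a b => A a b) c c.tail).prod

open scoped Classical in
/-- β_{ij} = (−1)^{(m−1)/2} P_m(i,j) for maximally matchable `i, j`, and `0` otherwise. -/
noncomputable def beta {n : ℕ} (A : Matrix (Fin n) (Fin n) ℝ) (i j : Fin n) : ℝ :=
  if MaxMatchable A i j then
    (-1 : ℝ) ^ (((theChain A i j).length - 2) / 2) * pathProd A (theChain A i j)
  else 0

/-- β̄_{i,j}(M): product of the cycle products of the 2-cycles of `M` not contained in
the alternating cycle chain from `i` to `j`. -/
noncomputable def betaBar {n : ℕ} (A : Matrix (Fin n) (Fin n) ℝ) (i j : Fin n)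
    (M : Finset (Sym2 (Fin n))) : ℝ :=
  ∏ e ∈ M.filter (fun e => e ∉ chainEdges (theChain A i j)), cycProd A e

/-- μ_{ij} = β_{ij} · Σ_{M ∈ 𝕄(i,j)} β̄_{i,j}(M). -/
noncomputable def mu {n : ℕ} (A : Matrix (Fin n) (Fin n) ℝ) (i j : Fin n) : ℝ :=
  beta A i j * ∑ M ∈ (MMset A i j).toFinite.toFinset, betaBar A i j M

/-- `X` is a group inverse of `A`. -/
def IsGroupInverse {n : ℕ} (A X : Matrix (Fin n) (Fin n) ℝ) : Prop :=
  A * X * A = A ∧ X * A * X = X ∧ A * X = X * A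

/-- A tree digraph: strongly connected and all of its cycles have length 2. -/
def IsTreeDigraph {n : ℕ} (G : Fin n → Fin n → Prop) : Prop :=
  StronglyConnected G ∧
  ∀ (a : Fin n) (l : List (Fin n)), (a :: l).Nodup → List.Chain G a l →
    G ((a :: l).getLast (List.cons_ne_nil a l)) a → (a :: l).length = 2

/-- A star tree digraph: a tree digraph with a center adjacent to every other vertex,
every other vertex being adjacent only to the center. -/
def IsStarTree {n : ℕ} (G : Fin n → Fin n → Prop) : Prop :=
  IsTreeDigraph G ∧
  ∃ c : Fin n, (∀ j, j ≠ c → Adjd G c j) ∧ ∀ i j, Adjd G i j → i = c ∨ j = c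

/-- A corona digraph: a simple symmetric digraph in which each non-pendant vertex is
adjacent to exactly one pendant vertex. -/
def IsCorona {n : ℕ} (G : Fin n → Fin n → Prop) : Prop :=
  IsSSD G ∧ ∀ i, ¬ Pendant G i → ∃! j, Adjd G i j ∧ Pendant G j

/-- 𝕄(i): the maximum matchings in which vertex `i` is matched. -/
noncomputable def MMi {n : ℕ} (A : Matrix (Fin n) (Fin n) ℝ) (i : Fin n) :
    Finset (Finset (Sym2 (Fin n))) :=
  {M | IsMaxMatching (DA A) M ∧ ∃ e ∈ M, i ∈ e}.toFinite.toFinset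


section Aux

lemma Adjd.symm' {n : ℕ} {G : Fin n → Fin n → Prop} {i j : Fin n} (h : Adjd G i j) :
    Adjd G j i := ⟨h.1.symm, h.2.2, h.2.1⟩

lemma pendant_chain_eq {n : ℕ} {G : Fin n → Fin n → Prop} {p q : Fin n}
    (hp : Pendant G p) (hpq : Adjd G p q) {c : List (Fin n)}
    (hc : IsCycleChainBtw G p q c) : c = [p, q] := by
  obtain ⟨⟨hnd, hlen, hch⟩, hhead, hlast⟩ := hc
  rcases c with _ | ⟨a, c⟩
  · simp at hhead
  rcases c with _ | ⟨b, c⟩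
  · simp at hlen
  have ha : a = p := by simpa using hhead
  subst ha
  have hab : Adjd G a b := (List.isChain_cons_cons.mp hch).1
  obtain ⟨j, _, huniq⟩ := hp
  have hb : b = q := (huniq b hab).trans (huniq q hpq).symm
  rcases c with _ | ⟨y, c⟩
  · rw [hb]
  · exfalso
    rw [List.getLast?_cons_cons, List.getLast?_cons_cons] at hlast
    obtain ⟨l', hl'⟩ := List.getLast?_eq_some_iff.mp hlast
    have hmem : q ∈ y :: c := by rw [hl']; simp
    rw [hb] at hnd
    simp only [List.nodup_cons] at hnd
    exact hnd.2.1 hmem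

lemma mem_mmset_iff {n : ℕ} {A : Matrix (Fin n) (Fin n) ℝ} {p q : Fin n}
    (hp : Pendant (DA A) p) (hpq : Adjd (DA A) p q) {M : Finset (Sym2 (Fin n))} :
    M ∈ MMset A p q ↔ IsMaxMatching (DA A) M ∧ s(p, q) ∈ M := by
  constructor
  · rintro ⟨hmax, c, hc, halt⟩
    refine ⟨hmax, ?_⟩
    have hceq := pendant_chain_eq hp hpq hc
    subst hceq
    have h0 : 0 < (chainEdges [p, q]).length := by simp [chainEdges]
    have := (halt.2 0 h0).mpr Even.zero
    simpa [chainEdges] using this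
  · rintro ⟨hmax, hM⟩
    refine ⟨hmax, [p, q], ⟨⟨by simp [hpq.1], by simp, List.isChain_pair.mpr hpq⟩, by simp, by simp⟩,
      ?_, ?_⟩
    · simp [chainEdges]
    · intro k hk
      simp only [chainEdges, List.tail_cons, List.zipWith_cons_cons, List.zipWith_nil_right,
        List.length_cons, List.length_nil] at hk ⊢
      interval_cases k
      · simpa using hM

lemma theChain_eq' {n : ℕ} {A : Matrix (Fin n) (Fin n) ℝ} {p q : Fin n}
    (hp : Pendant (DA A) p) (hpq : Adjd (DA A) p q)
    (hne : (MMset A p q).Nonempty) : theChain A p q = [p, q] := by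
  obtain ⟨M, hM⟩ := hne
  obtain ⟨hmax, c, hc, halt⟩ := hM
  have h : ∃ c, IsCycleChainBtw (DA A) p q c ∧ ∃ M ∈ MMset A p q, IsAltChain M c :=
    ⟨c, hc, M, ⟨hmax, c, hc, halt⟩, halt⟩
  rw [theChain, dif_pos h]
  exact pendant_chain_eq hp hpq h.choose_spec.1

lemma betaBar_eq_erase {n : ℕ} {A : Matrix (Fin n) (Fin n) ℝ} {p q : Fin n}
    (hchain : theChain A p q = [p, q]) (M : Finset (Sym2 (Fin n))) :
    betaBar A p q M = ∏ e ∈ M.erase s(p, q), cycProd A e := by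
  classical
  rw [betaBar, hchain]
  congr 1
  ext e
  simp [chainEdges, Finset.mem_erase, and_comm]

end Aux

/-- Remark 2.5(ii): if `i₁, …, i_{s+1}` are all the pendant vertices adjacent to a common
non-pendant neighbour `q`, then `Σ_{M ∈ 𝕄(i_m,q)} β̄_{i_m,q}(M)` is independent of `m`. -/
theorem betaBar_sum_independent {n : ℕ} (A : Matrix (Fin n) (Fin n) ℝ)
    (hD : InClassD (DA A)) (hSC : StronglyConnected (DA A))
    (s : ℕ) (q : Fin n) (hq : ¬ Pendant (DA A) q)
    (f : Fin (s + 1) → Fin n) (hinj : Function.Injective f)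
    (hrange : Set.range f = {p | Pendant (DA A) p ∧ Adjd (DA A) p q}) :
    ∀ m t : Fin (s + 1),
      (∑ M ∈ (MMset A (f m) q).toFinite.toFinset, betaBar A (f m) q M) =
        ∑ M ∈ (MMset A (f t) q).toFinite.toFinset, betaBar A (f t) q M := by
  classical
  -- the generic swap lemma
  have swapmem : ∀ a b : Fin n, Pendant (DA A) a → Adjd (DA A) a q →
      Pendant (DA A) b → Adjd (DA A) b q → a ≠ b →
      ∀ M, M ∈ MMset A a q →
        s(a, q) ∈ M ∧ s(b, q) ∉ M ∧ insert s(b, q) (M.erase s(a, q)) ∈ MMset A b q := by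
    intro a b ha haq hb hbq hab M hM
    obtain ⟨hmax, haM⟩ := (mem_mmset_iff ha haq).mp hM
    have hqa : q ∈ s(a, q) := by simp
    have hbuniq : ∀ y, Adjd (DA A) b y → y = q := by
      obtain ⟨w, _, hwu⟩ := hb
      intro y hy
      exact (hwu y hy).trans (hwu q hbq).symm
    have hedgene : s(b, q) ≠ s(a, q) := by
      intro h
      rw [Sym2.eq_iff] at h
      rcases h with ⟨h1, _⟩ | ⟨h1, _⟩
      · exact hab h1.symm
      · exact hbq.1 h1
    have hbnot : ∀ e ∈ M, b ∉ e := by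
      intro e heM hbe
      obtain ⟨i, j, rfl, hij⟩ := hmax.1.1 e heM
      have hebq : s(i, j) = s(b, q) := by
        rcases Sym2.mem_iff.mp hbe with h | h
        · subst h
          rw [hbuniq j hij]
        · subst h
          rw [hbuniq i hij.symm', Sym2.eq_swap]
      rw [hebq] at heM
      exact hmax.1.2 s(a, q) haM s(b, q) heM hedgene.symm q hqa (by simp)
    have hbM : s(b, q) ∉ M := fun h => hbnot _ h (by simp)
    refine ⟨haM, hbM, ?_⟩
    have hbMe : s(b, q) ∉ M.erase s(a, q) := fun h => hbM (Finset.mem_of_mem_erase h)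
    have hmatch : IsMatching (DA A) (insert s(b, q) (M.erase s(a, q))) := by
      constructor
      · intro e he
        rcases Finset.mem_insert.mp he with rfl | he
        · exact ⟨b, q, rfl, hbq⟩
        · exact hmax.1.1 e (Finset.mem_of_mem_erase he)
      · intro e he f hf hef v hv
        rcases Finset.mem_insert.mp he with rfl | he <;>
          rcases Finset.mem_insert.mp hf with rfl | hf
        · exact absurd rfl hef
        · have hfM := Finset.mem_of_mem_erase hf
          have hfne := Finset.ne_of_mem_erase hf
          rcases Sym2.mem_iff.mp hv with h | h
          · rw [h]; exact hbnot f hfM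
          · rw [h]; exact hmax.1.2 s(a, q) haM f hfM hfne.symm q hqa
        · have heM := Finset.mem_of_mem_erase he
          have hene := Finset.ne_of_mem_erase he
          intro hvf
          rcases Sym2.mem_iff.mp hvf with h | h
          · exact hbnot e heM (h ▸ hv)
          · exact hmax.1.2 s(a, q) haM e heM hene.symm q hqa (h ▸ hv)
        · exact hmax.1.2 e (Finset.mem_of_mem_erase he) f (Finset.mem_of_mem_erase hf)
            hef v hv
    have hcard : (insert s(b, q) (M.erase s(a, q))).card = M.card := by
      rw [Finset.card_insert_of_notMem hbMe, Finset.card_erase_add_one haM]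
    refine (mem_mmset_iff hb hbq).mpr ⟨⟨hmatch, ?_⟩, Finset.mem_insert_self _ _⟩
    intro M' hM'
    rw [hcard]
    exact hmax.2 M' hM'
  have hkey : ∀ p p' : Fin n, Pendant (DA A) p → Adjd (DA A) p q →
      Pendant (DA A) p' → Adjd (DA A) p' q → p ≠ p' →
      (∑ M ∈ (MMset A p q).toFinite.toFinset, betaBar A p q M) =
        ∑ M ∈ (MMset A p' q).toFinite.toFinset, betaBar A p' q M := by
    intro p p' hp hpq hp' hp'q hnepp
    refine Finset.sum_nbij' (i := fun M => insert s(p', q) (M.erase s(p, q)))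
      (j := fun N => insert s(p, q) (N.erase s(p', q))) ?_ ?_ ?_ ?_ ?_
    · intro M hMs
      rw [Set.Finite.mem_toFinset] at hMs ⊢
      exact (swapmem p p' hp hpq hp' hp'q hnepp M hMs).2.2
    · intro N hNs
      rw [Set.Finite.mem_toFinset] at hNs ⊢
      exact (swapmem p' p hp' hp'q hp hpq hnepp.symm N hNs).2.2
    · intro M hMs
      rw [Set.Finite.mem_toFinset] at hMs
      obtain ⟨haM, hbM, _⟩ := swapmem p p' hp hpq hp' hp'q hnepp M hMs
      have hbMe : s(p', q) ∉ M.erase s(p, q) := fun h => hbM (Finset.mem_of_mem_erase h)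
      show insert s(p, q) ((insert s(p', q) (M.erase s(p, q))).erase s(p', q)) = M
      rw [Finset.erase_insert hbMe, Finset.insert_erase haM]
    · intro N hNs
      rw [Set.Finite.mem_toFinset] at hNs
      obtain ⟨haN, hbN, _⟩ := swapmem p' p hp' hp'q hp hpq hnepp.symm N hNs
      have hbNe : s(p, q) ∉ N.erase s(p', q) := fun h => hbN (Finset.mem_of_mem_erase h)
      show insert s(p', q) ((insert s(p, q) (N.erase s(p', q))).erase s(p, q)) = N
      rw [Finset.erase_insert hbNe, Finset.insert_erase haN]
    · intro M hMs
      rw [Set.Finite.mem_toFinset] at hMs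
      obtain ⟨haM, hbM, hins⟩ := swapmem p p' hp hpq hp' hp'q hnepp M hMs
      have hc1 : theChain A p q = [p, q] := theChain_eq' hp hpq ⟨M, hMs⟩
      have hc2 : theChain A p' q = [p', q] := theChain_eq' hp' hp'q ⟨_, hins⟩
      rw [betaBar_eq_erase hc1, betaBar_eq_erase hc2]
      have hbMe : s(p', q) ∉ M.erase s(p, q) := fun h => hbM (Finset.mem_of_mem_erase h)
      rw [Finset.erase_insert hbMe]
  intro m t
  by_cases hmt : m = t
  · subst hmt; rfl
  · have hm : Pendant (DA A) (f m) ∧ Adjd (DA A) (f m) q := by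
      have : f m ∈ Set.range f := Set.mem_range_self m
      rw [hrange] at this
      exact this
    have ht : Pendant (DA A) (f t) ∧ Adjd (DA A) (f t) q := by
      have : f t ∈ Set.range f := Set.mem_range_self t
      rw [hrange] at this
      exact this
    exact hkey (f m) (f t) hm.1 hm.2 ht.1 ht.2 (fun h => hmt (hinj h))
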